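/- Suppose a subset σ of Z/n of size 2(l+1) is a disjoint union of l+1 pairwise disjoint cyclic blocks {i, i+1 mod n}, and suppose l/(l+1) < k/n with n ≥ 2l+3. Then some gap between two cyclically consecutive blocks of σ contains at least n-k-1 elements. -/

import Mathlib

/-- if `σ ⊆ ℤ/n` of size `2(l+1)` is a disjoint union of `l+1` pairwise
disjoint cyclic blocks `{i, i+1}`, and `l/(l+1) < k/n` with `n ≥ 2l+3`, then some gap
between two cyclically consecutive blocks contains at least `n-k-1` elements; that is,
some run of `n-k-1` cyclically consecutive elements of `ℤ/n` is disjoint from `σ`. -/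
theorem gap_of_blocks (n k l : ℕ) [NeZero n]
    (hfrac : l * n < k * (l + 1)) (hn : 2 * l + 3 ≤ n)
    (σ : Finset (ZMod n)) (hcard : σ.card = 2 * (l + 1)) (g : Fin (l + 1) → ZMod n)
    (hdisj : ∀ i j : Fin (l + 1), i ≠ j →
      Disjoint ({g i, g i + 1} : Finset (ZMod n)) ({g j, g j + 1} : Finset (ZMod n)))
    (hσ : σ = Finset.univ.biUnion (fun i : Fin (l + 1) => ({g i, g i + 1} : Finset (ZMod n)))) :
    ∃ j : ZMod n, ∀ t : ℕ, t < n - k - 1 → j + (t : ZMod n) ∉ σ := by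
  by_cases hk : n ≤ k + 1
  · exact ⟨0, fun t ht => absurd ht (by omega)⟩
  push_neg at hk
  by_contra hcon
  push_neg at hcon
  haveI : Fact (1 < n) := ⟨by omega⟩
  have hex : ∀ x : ZMod n, ∃ t : ℕ, x + (t : ZMod n) ∈ σ :=
    fun x => (hcon x).imp (fun t ht => ht.2)
  set d : ZMod n → ℕ := fun x => Nat.find (hex x) with hd
  have hdmem : ∀ x, x + (d x : ZMod n) ∈ σ := fun x => Nat.find_spec (hex x)
  have hdmin : ∀ x, ∀ t, t < d x → x + (t : ZMod n) ∉ σ :=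
    fun x t ht => Nat.find_min (hex x) ht
  have hdle : ∀ x, d x ≤ n - k - 2 := by
    intro x
    obtain ⟨t, ht1, ht2⟩ := hcon x
    have h4 : d x ≤ t := Nat.find_min' (hex x) ht2
    omega
  set F : ZMod n → ZMod n := fun x => x + (d x : ZMod n) with hF
  set fib : ZMod n → ℕ :=
    fun s => (Finset.univ.filter (fun x => F x = s)).card with hfib
  have hsum : (Finset.univ : Finset (ZMod n)).card = ∑ s ∈ σ, fib s :=
    Finset.card_eq_sum_card_fiberwise (fun x _ => hdmem x)
  have hfiber : ∀ s, fib s ≤ n - k - 1 := by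
    intro s
    have h1 : fib s ≤ (Finset.range (n - k - 1)).card := by
      apply Finset.card_le_card_of_injOn d
      · intro x hx
        simp only [Finset.mem_coe, Finset.mem_range]
        have := hdle x
        omega
      · intro x hx y hy hxy
        simp only [Finset.coe_filter, Set.mem_setOf_eq] at hx hy
        have h2 : x + (d x : ZMod n) = y + (d y : ZMod n) := hx.2.trans hy.2.symm
        rw [hxy] at h2
        exact add_right_cancel h2
    simpa using h1
  have hgσ : ∀ i, g i ∈ σ := fun i => by
    rw [hσ]
    exact Finset.mem_biUnion.2 ⟨i, Finset.mem_univ i, Finset.mem_insert_self _ _⟩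
  have hfiber1 : ∀ i, fib (g i + 1) ≤ 1 := by
    intro i
    refine Finset.card_le_one.2 ?_
    have key : ∀ x ∈ Finset.univ.filter (fun x => F x = g i + 1), x = g i + 1 := by
      intro x hx
      simp only [Finset.mem_filter, Finset.mem_univ, true_and] at hx
      rcases Nat.eq_zero_or_pos (d x) with h0 | hpos
      · have h2 : x + ((d x : ℕ) : ZMod n) = g i + 1 := hx
        rw [h0] at h2
        simpa using h2
      · exfalso
        have hc : ((d x : ℕ) : ZMod n) = ((d x - 1 : ℕ) : ZMod n) + 1 := by
          conv_lhs => rw [show d x = (d x - 1) + 1 by omega]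
          push_cast
          ring
        have h2 : x + (((d x - 1 : ℕ) : ZMod n) + 1) = g i + 1 := by
          rw [← hc]; exact hx
        have h3 : x + ((d x - 1 : ℕ) : ZMod n) = g i := by
          have := h2
          rw [← add_assoc] at this
          exact add_right_cancel this
        exact hdmin x (d x - 1) (by omega) (h3 ▸ hgσ i)
    intro a ha b hb
    rw [key a ha, key b hb]
  have hdisj' : ((Finset.univ : Finset (Fin (l + 1))) : Set (Fin (l + 1))).PairwiseDisjoint
      (fun i => ({g i, g i + 1} : Finset (ZMod n))) :=
    fun i _ j _ hij => hdisj i j hij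
  have hne : ∀ i, g i ≠ g i + 1 := by
    intro i h
    have : (1 : ZMod n) = 0 := by
      have := left_eq_add.mp h
      exact this
    exact one_ne_zero this
  have hsplit : ∑ s ∈ σ, fib s = ∑ i : Fin (l + 1), (fib (g i) + fib (g i + 1)) := by
    rw [hσ, Finset.sum_biUnion hdisj']
    exact Finset.sum_congr rfl (fun i _ => Finset.sum_pair (hne i))
  have hbound : ∑ s ∈ σ, fib s ≤ (l + 1) * (n - k) := by
    rw [hsplit]
    calc ∑ i : Fin (l + 1), (fib (g i) + fib (g i + 1))
        ≤ ∑ _i : Fin (l + 1), ((n - k - 1) + 1) :=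
          Finset.sum_le_sum (fun i _ => add_le_add (hfiber (g i)) (hfiber1 i))
      _ = (l + 1) * (n - k) := by
          rw [Finset.sum_const, Finset.card_univ, Fintype.card_fin, smul_eq_mul]
          congr 1
          omega
  have hcardn : (Finset.univ : Finset (ZMod n)).card = n := by
    rw [Finset.card_univ, ZMod.card]
  have hfin : n ≤ (l + 1) * (n - k) := by
    exact (hcardn.symm.trans hsum).trans_le hbound
  -- arithmetic contradiction
  have e1 : (l + 1) * (n - k) + (l + 1) * k = (l + 1) * n := by
    rw [← Nat.mul_add]
    congr 1
    omega
  have e2 : (l + 1) * n = l * n + n := by ring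
  have e3 : (l + 1) * k = k * (l + 1) := Nat.mul_comm _ _
  omega
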